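/- Let H be a complex Hilbert space, (T_n)_{n∈ℕ} a sequence in B(H) with sup_n ‖T_n‖ < ∞, b ∈ B(H), and (b_i)_{i∈I} a net in B(H) indexed by a nonempty directed set (equivalently, along a nontrivial filter) with sup_i ‖b_i‖ < ∞, such that b_i ξ → bξ and b_i* ξ → b* ξ for every ξ ∈ H. If for every index i and all ξ, η ∈ H one has ⟨(T_n b_i − b_i T_n)ξ, η⟩ → 0 as n → ∞, then for all ξ, η ∈ H one has ⟨(T_n b − b T_n)ξ, η⟩ → 0 as n → ∞. -/

import Mathlib

open Filter

/-- Passing weak-operator vanishing of commutators through bounded strong-* limits: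
if `sup_n ‖T_n‖ < ∞`, the net `(b_i)` is bounded and converges strong-* to `b`, and
`[T_n, b_i] → 0` weakly for every `i`, then `[T_n, b] → 0` weakly. -/
theorem wot_commutator_limit
    {H : Type*} [NormedAddCommGroup H] [InnerProductSpace ℂ H] [CompleteSpace H]
    (T : ℕ → (H →L[ℂ] H)) (CT : ℝ) (hT : ∀ n, ‖T n‖ ≤ CT)
    (b : H →L[ℂ] H)
    {ι : Type*} (l : Filter ι) [l.NeBot]
    (bi : ι → (H →L[ℂ] H)) (Cb : ℝ) (hbi : ∀ i, ‖bi i‖ ≤ Cb)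
    (hsot : ∀ ξ : H, Tendsto (fun i => (bi i) ξ) l (nhds (b ξ)))
    (hsot_star : ∀ ξ : H, Tendsto (fun i => (star (bi i)) ξ) l (nhds ((star b) ξ)))
    (hcomm : ∀ (i : ι) (ξ η : H),
      Tendsto (fun n => (inner ℂ ((T n * bi i - bi i * T n) ξ) η : ℂ)) atTop (nhds 0)) :
    ∀ ξ η : H,
      Tendsto (fun n => (inner ℂ ((T n * b - b * T n) ξ) η : ℂ)) atTop (nhds 0) := by
  intro ξ η
  rw [Metric.tendsto_atTop]
  intro ε hε
  have hCT0 : 0 ≤ CT := le_trans (norm_nonneg _) (hT 0)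
  set δ := ε / (3 * (CT + 1) * (‖ξ‖ + ‖η‖ + 1)) with hδ
  have hδpos : 0 < δ := by positivity
  have h1 := (hsot ξ).eventually (Metric.ball_mem_nhds (b ξ) hδpos)
  have h2 := (hsot_star η).eventually (Metric.ball_mem_nhds ((star b) η) hδpos)
  obtain ⟨i, hi1, hi2⟩ := (h1.and h2).exists
  rw [dist_eq_norm] at hi1 hi2
  have hc := (Metric.tendsto_atTop.mp (hcomm i ξ η)) (ε / 3) (by positivity)
  obtain ⟨N, hN⟩ := hc
  refine ⟨N, fun n hn => ?_⟩
  have key : (inner ℂ ((T n * b - b * T n) ξ) η : ℂ)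
      = inner ℂ ((T n * bi i - bi i * T n) ξ) η
        + inner ℂ ((T n) ((b - bi i) ξ)) η
        + inner ℂ ((bi i - b) ((T n) ξ)) η := by
    simp only [ContinuousLinearMap.mul_apply, ContinuousLinearMap.sub_apply, map_sub,
      inner_sub_left, inner_add_left]
    ring
  have hd1 : dist (inner ℂ ((T n * bi i - bi i * T n) ξ) η : ℂ) 0 < ε / 3 := hN n hn
  rw [dist_zero_right] at hd1 ⊢
  have hδle : δ * ((CT + 1) * (‖ξ‖ + ‖η‖ + 1)) = ε / 3 := by
    rw [hδ]; field_simp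
  have h2bd : ‖(inner ℂ ((T n) ((b - bi i) ξ)) η : ℂ)‖ ≤ ε / 3 := by
    calc ‖(inner ℂ ((T n) ((b - bi i) ξ)) η : ℂ)‖
        ≤ ‖(T n) ((b - bi i) ξ)‖ * ‖η‖ := norm_inner_le_norm _ _
      _ ≤ (‖T n‖ * ‖(b - bi i) ξ‖) * ‖η‖ := by
          gcongr; exact (T n).le_opNorm _
      _ ≤ (CT * δ) * ‖η‖ := by
          have : ‖(b - bi i) ξ‖ < δ := by
            simpa [ContinuousLinearMap.sub_apply, norm_sub_rev] using hi1
          gcongr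
          exact (hT n)
      _ ≤ δ * ((CT + 1) * (‖ξ‖ + ‖η‖ + 1)) := by
          have hm : CT * ‖η‖ ≤ (CT + 1) * (‖ξ‖ + ‖η‖ + 1) :=
            mul_le_mul (by linarith) (by linarith [norm_nonneg ξ]) (norm_nonneg η) (by linarith)
          nlinarith [mul_le_mul_of_nonneg_left hm hδpos.le]
      _ = ε / 3 := hδle
  have h3bd : ‖(inner ℂ ((bi i - b) ((T n) ξ)) η : ℂ)‖ ≤ ε / 3 := by
    have heq : (inner ℂ ((bi i - b) ((T n) ξ)) η : ℂ)
        = inner ℂ ((T n) ξ) ((star (bi i) - star b) η) := by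
      rw [ContinuousLinearMap.star_eq_adjoint, ContinuousLinearMap.star_eq_adjoint]
      simp only [ContinuousLinearMap.sub_apply, inner_sub_left, inner_sub_right,
        ContinuousLinearMap.adjoint_inner_right]
    calc ‖(inner ℂ ((bi i - b) ((T n) ξ)) η : ℂ)‖
        = ‖(inner ℂ ((T n) ξ) ((star (bi i) - star b) η) : ℂ)‖ := by rw [heq]
      _ ≤ ‖(T n) ξ‖ * ‖(star (bi i) - star b) η‖ := norm_inner_le_norm _ _
      _ ≤ (CT * ‖ξ‖) * δ := by
          have h' : ‖(star (bi i) - star b) η‖ < δ := by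
            simpa [ContinuousLinearMap.sub_apply] using hi2
          have hTξ : ‖(T n) ξ‖ ≤ CT * ‖ξ‖ :=
            ((T n).le_opNorm ξ).trans (mul_le_mul_of_nonneg_right (hT n) (norm_nonneg ξ))
          exact mul_le_mul hTξ h'.le (norm_nonneg _) (mul_nonneg hCT0 (norm_nonneg _))
      _ ≤ δ * ((CT + 1) * (‖ξ‖ + ‖η‖ + 1)) := by
          have hm : CT * ‖ξ‖ ≤ (CT + 1) * (‖ξ‖ + ‖η‖ + 1) :=
            mul_le_mul (by linarith) (by linarith [norm_nonneg η]) (norm_nonneg ξ) (by linarith)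
          nlinarith [mul_le_mul_of_nonneg_left hm hδpos.le]
      _ = ε / 3 := hδle
  calc ‖(inner ℂ ((T n * b - b * T n) ξ) η : ℂ)‖
      ≤ ‖(inner ℂ ((T n * bi i - bi i * T n) ξ) η : ℂ)‖
        + ‖(inner ℂ ((T n) ((b - bi i) ξ)) η : ℂ)‖
        + ‖(inner ℂ ((bi i - b) ((T n) ξ)) η : ℂ)‖ := by
        rw [key]; exact norm_add₃_le
    _ < ε / 3 + ε / 3 + ε / 3 :=
        add_lt_add_of_lt_of_le (add_lt_add_of_lt_of_le hd1 h2bd) h3bd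
    _ = ε := by ring
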